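/- Let N ∈ ℕ, y ∈ ℝ^N, 0 < R < ∞, and let f be a real-valued function defined on a set containing all vertices A_δ(y,R), δ ∈ {−1,1}^N, of C(y,R). Then Λ(f, C(y,R)) is differentiable at every point x in the interior of C(y,R), and for every i ∈ {1,…,N}, |∂Λ(f, C(y,R))/∂x_i (x)| ≤ L, where L is the Lipschitz constant (with respect to the ℓ_1-norm on ℝ^N) of the restriction of f to the vertex set {A_δ(y,R) : δ ∈ {−1,1}^N}. -/

import Mathlib

noncomputable section

open Filter Topology
open scoped Classical

/-- The sign `±1` associated with a Boolean. -/
def bsgn (b : Bool) : ℝ := if b then 1 else -1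

/-- The hypercube `C(y,R) = {x : max_i |x_i − y_i| ≤ R/2}` with centre `y` and
edge length `R`. -/
def cube {n : ℕ} (y : Fin n → ℝ) (R : ℝ) : Set (Fin n → ℝ) :=
  {x | ∀ i, |x i - y i| ≤ R / 2}

/-- The vertex `A_δ(y,R) = y + (R/2)δ` of the hypercube `C(y,R)`, `δ ∈ {−1,1}^n`. -/
def vertex {n : ℕ} (y : Fin n → ℝ) (R : ℝ) (δ : Fin n → Bool) : Fin n → ℝ :=
  fun i => y i + R / 2 * bsgn (δ i)

/-- A function `Φ` has property (AF) on a (convex) set `B ⊆ ℝ^n` if its restriction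
to every segment contained in `B` and parallel to a coordinate axis is affine. -/
def HasAF {n : ℕ} (B : Set (Fin n → ℝ)) (Φ : (Fin n → ℝ) → ℝ) : Prop :=
  ∀ a b : Fin n → ℝ, a ∈ B → b ∈ B → (∃ i : Fin n, ∀ j, j ≠ i → a j = b j) →
    ∀ t : ℝ, t ∈ Set.Icc (0 : ℝ) 1 →
      Φ (fun j => a j + t * (b j - a j)) = (1 - t) * Φ a + t * Φ b

/-- The coordinatewise-affine interpolation `Λ(f, C(y,R))` of `f` on the hypercube
`C(y,R)`: the unique function with property (AF) on `C(y,R)` agreeing with `f` at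
all `2^n` vertices (written here in its explicit multilinear form). -/
def lam {n : ℕ} (f : (Fin n → ℝ) → ℝ) (y : Fin n → ℝ) (R : ℝ)
    (x : Fin n → ℝ) : ℝ :=
  ∑ δ : Fin n → Bool,
    (∏ i, if δ i then (x i - y i + R / 2) / R else 1 - (x i - y i + R / 2) / R) *
      f (vertex y R δ)

/-- `g` is `L`-Lipschitz on the set `S` with respect to the `ℓ₁`-norm on `ℝ^n`. -/
def LipOnL1 {n : ℕ} (L : ℝ) (S : Set (Fin n → ℝ)) (g : (Fin n → ℝ) → ℝ) : Prop :=
  ∀ x ∈ S, ∀ x' ∈ S, |g x - g x'| ≤ L * ∑ i, |x i - x' i|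

/-- weight factor -/
def wt {n : ℕ} (y : Fin n → ℝ) (R : ℝ) (z : Fin n → ℝ) (j : Fin n) (b : Bool) : ℝ :=
  if b then (z j - y j + R / 2) / R else 1 - (z j - y j + R / 2) / R

/-- the candidate derivative of `lam` at `x` -/
def Dmap {n : ℕ} (f : (Fin n → ℝ) → ℝ) (y : Fin n → ℝ) (R : ℝ) (x : Fin n → ℝ) :
    (Fin n → ℝ) →L[ℝ] ℝ :=
  ∑ δ : Fin n → Bool,
    f (vertex y R δ) •
      ∑ j, (∏ k ∈ Finset.univ.erase j, wt y R x k (δ k)) •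
        ((bsgn (δ j) / R) • (ContinuousLinearMap.proj j : (Fin n → ℝ) →L[ℝ] ℝ))

lemma wt_hasFDerivAt {n : ℕ} (y : Fin n → ℝ) (R : ℝ) (x : Fin n → ℝ) (j : Fin n) (b : Bool) :
    HasFDerivAt (fun z : Fin n → ℝ => wt y R z j b)
      ((bsgn b / R) • (ContinuousLinearMap.proj j : (Fin n → ℝ) →L[ℝ] ℝ)) x := by
  have hproj : HasFDerivAt (fun z : Fin n → ℝ => z j)
      (ContinuousLinearMap.proj j : (Fin n → ℝ) →L[ℝ] ℝ) x :=
    (ContinuousLinearMap.proj j : (Fin n → ℝ) →L[ℝ] ℝ).hasFDerivAt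
  have hbase : HasFDerivAt (fun z : Fin n → ℝ => (z j - y j + R / 2) / R)
      (R⁻¹ • (ContinuousLinearMap.proj j : (Fin n → ℝ) →L[ℝ] ℝ)) x := by
    simpa [div_eq_mul_inv] using ((hproj.sub_const (y j)).add_const (R / 2)).mul_const R⁻¹
  cases b with
  | true =>
      have : (bsgn true / R : ℝ) = R⁻¹ := by simp [bsgn, one_div]
      rw [this]
      simpa [wt] using hbase
  | false =>
      have h := hbase.const_sub 1
      have heq : ((bsgn false / R : ℝ) •
          (ContinuousLinearMap.proj j : (Fin n → ℝ) →L[ℝ] ℝ)) =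
          -(R⁻¹ • (ContinuousLinearMap.proj j : (Fin n → ℝ) →L[ℝ] ℝ)) := by
        ext v; simp [bsgn]; ring
      rw [heq]
      simpa [wt] using h

lemma lam_hasFDerivAt {n : ℕ} (f : (Fin n → ℝ) → ℝ) (y : Fin n → ℝ) (R : ℝ)
    (x : Fin n → ℝ) : HasFDerivAt (lam f y R) (Dmap f y R x) x := by
  have : lam f y R = fun z => ∑ δ ∈ (Finset.univ : Finset (Fin n → Bool)),
      (∏ j, wt y R z j (δ j)) * f (vertex y R δ) := by
    funext z; simp [lam, wt]
  rw [this, Dmap]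
  apply HasFDerivAt.fun_sum
  intro δ _
  have hp : HasFDerivAt (fun z : Fin n → ℝ => ∏ j ∈ Finset.univ, wt y R z j (δ j))
      (∑ j ∈ Finset.univ, (∏ k ∈ Finset.univ.erase j, wt y R x k (δ k)) •
        ((bsgn (δ j) / R) • (ContinuousLinearMap.proj j : (Fin n → ℝ) →L[ℝ] ℝ))) x :=
    HasFDerivAt.finset_prod (fun j _ => wt_hasFDerivAt y R x j (δ j))
  simpa using hp.mul_const (f (vertex y R δ))

lemma sum_bool' (h : Bool → ℝ) : ∑ b, h b = h true + h false := by
  simp [Fintype.univ_bool]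

/-- **Statement 7.** The interpolation `Λ(f, C(y,R))` is differentiable at every
interior point `x` of `C(y,R)`, and each partial derivative `∂Λ/∂x_i(x)` is bounded
in absolute value by (any bound `L` for) the Lipschitz constant, with respect to the
`ℓ₁`-norm, of the restriction of `f` to the vertex set of `C(y,R)`. -/
theorem lam_differentiable_and_partial_bound (N : ℕ) (hN : 0 < N)
    (y : Fin N → ℝ) (R : ℝ) (hR : 0 < R) (f : (Fin N → ℝ) → ℝ)
    (x : Fin N → ℝ) (hx : ∀ i, |x i - y i| < R / 2) :
    DifferentiableAt ℝ (lam f y R) x ∧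
      ∀ L : ℝ, LipOnL1 L {v | ∃ δ : Fin N → Bool, v = vertex y R δ} f →
        ∀ i : Fin N, |fderiv ℝ (lam f y R) x (Pi.single i 1)| ≤ L := by
  have hD := lam_hasFDerivAt f y R x
  refine ⟨hD.differentiableAt, ?_⟩
  intro L hL i
  rw [hD.fderiv]
  -- each weight is nonnegative at the interior point x
  have hw0 : ∀ k b, 0 ≤ wt y R x k b := by
    intro k b
    have hk := abs_lt.1 (hx k)
    cases b with
    | true =>
        have : 0 ≤ x k - y k + R / 2 := by linarith [hk.1]
        simpa [wt] using div_nonneg this hR.le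
    | false =>
        have h1 : (x k - y k + R / 2) / R ≤ 1 := by
          rw [div_le_one hR]; linarith [hk.2]
        simp [wt]; linarith
  -- compute the value of the derivative on Pi.single i 1
  have happ : Dmap f y R x (Pi.single i 1) =
      ∑ δ : Fin N → Bool,
        (∏ k ∈ Finset.univ.erase i, wt y R x k (δ k)) * (bsgn (δ i) / R) *
          f (vertex y R δ) := by
    rw [Dmap, ContinuousLinearMap.sum_apply]
    refine Finset.sum_congr rfl fun δ _ => ?_
    simp only [ContinuousLinearMap.smul_apply, ContinuousLinearMap.sum_apply,
      ContinuousLinearMap.proj_apply, Pi.single_apply, smul_eq_mul, mul_ite, mul_one, mul_zero]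
    rw [Finset.sum_ite_eq' Finset.univ i
      (fun j => (∏ k ∈ Finset.univ.erase j, wt y R x k (δ k)) * (bsgn (δ j) / R))]
    simp; ring
  rw [happ]
  -- reindex the sum by splitting off coordinate i
  set e := Equiv.funSplitAt i Bool with he
  rw [← Equiv.sum_comp e.symm (fun δ : Fin N → Bool =>
    (∏ k ∈ Finset.univ.erase i, wt y R x k (δ k)) * (bsgn (δ i) / R) * f (vertex y R δ)),
    Fintype.sum_prod_type,
    sum_bool' (fun b => ∑ ε : {j // j ≠ i} → Bool,
      (fun δ : Fin N → Bool =>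
        (∏ k ∈ Finset.univ.erase i, wt y R x k (δ k)) * (bsgn (δ i) / R) * f (vertex y R δ))
        (e.symm (b, ε))),
    ← Finset.sum_add_distrib]
  have hsymm : ∀ (b : Bool) (ε : {j // j ≠ i} → Bool) (k : Fin N) (hk : k ≠ i),
      e.symm (b, ε) k = ε ⟨k, hk⟩ := by
    intro b ε k hk
    simp [he, Equiv.funSplitAt, hk]
  have hsymmi : ∀ (b : Bool) (ε : {j // j ≠ i} → Bool), e.symm (b, ε) i = b := by
    intro b ε
    simp [he, Equiv.funSplitAt]
  -- the common weight product for a given ε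
  set P : ({j // j ≠ i} → Bool) → ℝ := fun ε =>
    ∏ k ∈ Finset.univ.erase i, wt y R x k (e.symm (true, ε) k) with hP
  have hPε : ∀ ε : {j // j ≠ i} → Bool,
      (∏ k ∈ Finset.univ.erase i, wt y R x k (e.symm (false, ε) k)) = P ε := by
    intro ε
    refine Finset.prod_congr rfl fun k hk => ?_
    have hk' : k ≠ i := (Finset.mem_erase.1 hk).1
    rw [hsymm false ε k hk', hsymm true ε k hk']
  have hPnonneg : ∀ ε, 0 ≤ P ε := fun ε => Finset.prod_nonneg fun k _ => hw0 k _
  -- combine paired terms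
  have hpair : ∀ ε : {j // j ≠ i} → Bool,
      (∏ k ∈ Finset.univ.erase i, wt y R x k (e.symm (true, ε) k)) *
          (bsgn (e.symm (true, ε) i) / R) * f (vertex y R (e.symm (true, ε))) +
        (∏ k ∈ Finset.univ.erase i, wt y R x k (e.symm (false, ε) k)) *
          (bsgn (e.symm (false, ε) i) / R) * f (vertex y R (e.symm (false, ε))) =
      P ε * ((f (vertex y R (e.symm (true, ε))) - f (vertex y R (e.symm (false, ε)))) / R) := by
    intro ε
    rw [hsymmi, hsymmi, hPε ε]
    have h1 : (∏ k ∈ Finset.univ.erase i, wt y R x k (e.symm (true, ε) k)) = P ε := rfl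
    rw [h1]
    simp only [bsgn, if_pos, if_true, Bool.false_eq_true, if_false]
    ring
  -- bound each paired term
  have hbound : ∀ ε : {j // j ≠ i} → Bool,
      |P ε * ((f (vertex y R (e.symm (true, ε))) - f (vertex y R (e.symm (false, ε)))) / R)| ≤
        P ε * L := by
    intro ε
    have hmem1 : vertex y R (e.symm (true, ε)) ∈
        {v | ∃ δ : Fin N → Bool, v = vertex y R δ} := ⟨_, rfl⟩
    have hmem2 : vertex y R (e.symm (false, ε)) ∈
        {v | ∃ δ : Fin N → Bool, v = vertex y R δ} := ⟨_, rfl⟩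
    have hlip := hL _ hmem1 _ hmem2
    have hsum : ∑ k, |vertex y R (e.symm (true, ε)) k - vertex y R (e.symm (false, ε)) k| = R := by
      have hterm : ∀ k : Fin N,
          |vertex y R (e.symm (true, ε)) k - vertex y R (e.symm (false, ε)) k| =
            if k = i then R else 0 := by
        intro k
        by_cases hk : k = i
        · subst hk
          have hd : vertex y R (e.symm (true, ε)) k - vertex y R (e.symm (false, ε)) k = R := by
            simp only [vertex, hsymmi, bsgn, if_true, Bool.false_eq_true, if_false]
            ring
          rw [if_pos rfl, hd, abs_of_pos hR]
        · have hd : vertex y R (e.symm (true, ε)) k = vertex y R (e.symm (false, ε)) k := by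
            simp only [vertex]
            rw [hsymm true ε k hk, hsymm false ε k hk]
          rw [if_neg hk, hd, sub_self, abs_zero]
      rw [Finset.sum_congr rfl fun k _ => hterm k]
      simp
    rw [hsum] at hlip
    have hdiff : |f (vertex y R (e.symm (true, ε))) - f (vertex y R (e.symm (false, ε)))| / R ≤ L :=
      (div_le_iff₀ hR).2 (by linarith [hlip])
    calc |P ε * ((f (vertex y R (e.symm (true, ε))) - f (vertex y R (e.symm (false, ε)))) / R)|
        = P ε * (|f (vertex y R (e.symm (true, ε))) - f (vertex y R (e.symm (false, ε)))| / R) := by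
          rw [abs_mul, abs_of_nonneg (hPnonneg ε), abs_div, abs_of_pos hR]
      _ ≤ P ε * L := mul_le_mul_of_nonneg_left hdiff (hPnonneg ε)
  -- the weights sum to 1
  have hPsum : ∑ ε : {j // j ≠ i} → Bool, P ε = 1 := by
    have h1 : ∀ ε : {j // j ≠ i} → Bool,
        P ε = ∏ a : {j // j ≠ i}, wt y R x a.1 (ε a) := by
      intro ε
      show (∏ k ∈ Finset.univ.erase i, wt y R x k (e.symm (true, ε) k)) = _
      rw [Finset.prod_subtype (Finset.univ.erase i)
        (fun k => by simp [Finset.mem_erase] : ∀ k : Fin N, k ∈ Finset.univ.erase i ↔ k ≠ i)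
        (fun k => wt y R x k (e.symm (true, ε) k))]
      refine Finset.prod_congr rfl fun a _ => ?_
      rw [hsymm true ε a.1 a.2]
    rw [Finset.sum_congr rfl fun ε _ => h1 ε]
    rw [← Fintype.prod_sum (fun (a : {j // j ≠ i}) (b : Bool) => wt y R x a.1 b)]
    have : ∀ a : {j // j ≠ i}, ∑ b : Bool, wt y R x a.1 b = 1 := by
      intro a
      rw [sum_bool']
      simp [wt]
    rw [Finset.prod_congr rfl fun a _ => this a]
    simp
  rw [Finset.sum_congr rfl fun ε _ => hpair ε]
  refine le_trans (Finset.abs_sum_le_sum_abs _ _)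
    (le_trans (Finset.sum_le_sum fun ε _ => hbound ε) ?_)
  rw [← Finset.sum_mul, hPsum, one_mul]
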